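/- Let λ ∈ ℂ be given. Assume that μ ∈ ℂ is a simple eigenvalue of the generalized eigenvalue problem −(B₁ + λB₂)y = μ B₃ y, i.e. μ is a root of multiplicity exactly one of the polynomial z ↦ det(B₁ + λB₂ + z B₃), and let y ∈ ℂᵐ be a corresponding eigenvector (so B(λ,μ)y = 0, y ≠ 0) normalized as cᵀy = 1. Then the Jacobian J(λ,μ,y) is invertible. -/

import Mathlib

open Matrix Polynomial

/-- **Simple eigenvalues give a nonsingular Jacobian.**
Let `λ ∈ ℂ` be given.  Assume `μ` is a simple eigenvalue of the GEP `−(B₁ + λB₂)y = μB₃y`,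
i.e. `μ` is a root of multiplicity exactly one of `z ↦ det(B₁ + λB₂ + zB₃)`, and let `y` be a
corresponding eigenvector normalized as `cᵀy = 1`.  Then the Jacobian `J(λ,μ,y)` is invertible. -/
theorem jacobian_nonsingular_of_simple_eigenvalue
    (m : ℕ) (B₁ B₂ B₃ : Matrix (Fin m) (Fin m) ℂ) (c : Fin m → ℂ)
    (lam μ : ℂ) (y : Fin m → ℂ)
    (hsimple : Polynomial.rootMultiplicity μ
      (Matrix.det (B₁.map Polynomial.C + (Polynomial.C lam : Polynomial ℂ) • B₂.map Polynomial.C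
        + (Polynomial.X : Polynomial ℂ) • B₃.map Polynomial.C)) = 1)
    (hB : (B₁ + lam • B₂ + μ • B₃) *ᵥ y = 0)
    (hy : y ≠ 0)
    (hc : c ⬝ᵥ y = 1) :
    IsUnit (Matrix.fromBlocks (B₁ + lam • B₂ + μ • B₃)
        (Matrix.replicateCol (Fin 1) (B₃ *ᵥ y)) (Matrix.replicateRow (Fin 1) c) 0) := by
  classical
  set P : Matrix (Fin m) (Fin m) (Polynomial ℂ) :=
    B₁.map Polynomial.C + (Polynomial.C lam : Polynomial ℂ) • B₂.map Polynomial.C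
      + (Polynomial.X : Polynomial ℂ) • B₃.map Polynomial.C with hP
  set p : Polynomial ℂ := P.det with hpdef
  have hp0 : p ≠ 0 := by
    intro h
    rw [h] at hsimple
    simp at hsimple
  set q : Polynomial ℂ := p /ₘ (X - Polynomial.C μ) ^ rootMultiplicity μ p with hqdef
  have hq : eval μ q ≠ 0 := eval_divByMonic_pow_rootMultiplicity_ne_zero μ hp0
  have hpq : (X - Polynomial.C μ) * q = p := by
    have h1 := pow_mul_divByMonic_rootMultiplicity_eq p μ
    rw [hsimple, pow_one] at h1
    rw [hqdef, hsimple, pow_one]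
    exact h1
  -- linear relation satisfied by y
  have hB' : B₁ *ᵥ y + lam • (B₂ *ᵥ y) + μ • (B₃ *ᵥ y) = 0 := by
    rw [← smul_mulVec, ← smul_mulVec, ← add_mulVec, ← add_mulVec]; exact hB
  -- the polynomial bordered matrix
  set M : Matrix (Fin m ⊕ Fin 1) (Fin m ⊕ Fin 1) (Polynomial ℂ) :=
    Matrix.fromBlocks P (Matrix.replicateCol (Fin 1) fun i => Polynomial.C ((B₃ *ᵥ y) i))
      (Matrix.replicateRow (Fin 1) fun i => Polynomial.C (c i)) 0 with hM
  set k : Fin m ⊕ Fin 1 := Sum.inr 0 with hk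
  -- the determinantal column linear map
  set f : ((Fin m ⊕ Fin 1) → Polynomial ℂ) →ₗ[Polynomial ℂ] Polynomial ℂ :=
    { toFun := fun u => (M.updateCol k u).det
      map_add' := det_updateCol_add M k
      map_smul' := det_updateCol_smul M k } with hf
  have hCsum : ∀ (D : Matrix (Fin m) (Fin m) ℂ) (i : Fin m),
      (∑ j, Polynomial.C (D i j) * Polynomial.C (y j)) = Polynomial.C ((D *ᵥ y) i) := by
    intro D i
    have hDi : (D *ᵥ y) i = ∑ j, D i j * y j := rfl
    rw [hDi, map_sum]
    exact Finset.sum_congr rfl fun j _ => (Polynomial.C_mul).symm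
  have key : ∀ i, (P *ᵥ fun j => Polynomial.C (y j)) i
      = (X - Polynomial.C μ) * Polynomial.C ((B₃ *ᵥ y) i) := by
    intro i
    have h0 : Polynomial.C ((B₁ *ᵥ y) i) + Polynomial.C lam * Polynomial.C ((B₂ *ᵥ y) i)
        + Polynomial.C μ * Polynomial.C ((B₃ *ᵥ y) i) = 0 := by
      have := congrFun hB' i
      simp only [Pi.add_apply, Pi.smul_apply, smul_eq_mul, Pi.zero_apply] at this
      rw [← Polynomial.C_mul, ← Polynomial.C_mul, ← Polynomial.C_add, ← Polynomial.C_add, this,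
        Polynomial.C_0]
    calc (P *ᵥ fun j => Polynomial.C (y j)) i
        = ∑ j, (Polynomial.C (B₁ i j) + Polynomial.C lam * Polynomial.C (B₂ i j)
            + X * Polynomial.C (B₃ i j)) * Polynomial.C (y j) := by
          simp only [hP, Matrix.mulVec, dotProduct, Matrix.add_apply, Matrix.smul_apply,
            Matrix.map_apply, smul_eq_mul]
      _ = (∑ j, Polynomial.C (B₁ i j) * Polynomial.C (y j))
            + Polynomial.C lam * ∑ j, Polynomial.C (B₂ i j) * Polynomial.C (y j)
            + X * ∑ j, Polynomial.C (B₃ i j) * Polynomial.C (y j) := by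
          rw [Finset.mul_sum, Finset.mul_sum, ← Finset.sum_add_distrib, ← Finset.sum_add_distrib]
          exact Finset.sum_congr rfl fun j _ => by ring
      _ = Polynomial.C ((B₁ *ᵥ y) i) + Polynomial.C lam * Polynomial.C ((B₂ *ᵥ y) i)
            + X * Polynomial.C ((B₃ *ᵥ y) i) := by rw [hCsum, hCsum, hCsum]
      _ = (X - Polynomial.C μ) * Polynomial.C ((B₃ *ᵥ y) i) := by linear_combination h0
  -- Step 1: scale the border column by (X - C μ)
  have h1 : (X - Polynomial.C μ) * M.det
      = (M.updateCol k fun i => (X - Polynomial.C μ) * M i k).det := by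
    have : (fun i => (X - Polynomial.C μ) * M i k)
        = (X - Polynomial.C μ) • fun i => M i k := rfl
    rw [this, det_updateCol_smul, Matrix.updateCol_eq_self]
  have hv : (fun i => (X - Polynomial.C μ) * M i k)
      = Sum.elim (fun i => (P *ᵥ fun j => Polynomial.C (y j)) i) (fun _ => 0) := by
    funext i
    cases i with
    | inl i =>
        rw [Sum.elim_inl, key i]
        simp only [hM, hk, Matrix.fromBlocks_apply₁₂, Matrix.replicateCol_apply]
    | inr i =>
        simp only [Sum.elim_inr, hM, hk, Matrix.fromBlocks_apply₂₂, Matrix.zero_apply, mul_zero]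
  -- Step 2: column operations
  set w : (Fin m ⊕ Fin 1) → Polynomial ℂ := Sum.elim (fun _ => 0) (fun _ => -1) with hw
  have hvw : Sum.elim (fun i => (P *ᵥ fun j => Polynomial.C (y j)) i) (fun _ => (0 : Polynomial ℂ))
      = w + ∑ j, Polynomial.C (y j) • (fun i => M i (Sum.inl j)) := by
    funext i
    cases i with
    | inl i =>
        simp only [Sum.elim_inl, Pi.add_apply, hw, Finset.sum_apply, Pi.smul_apply,
          smul_eq_mul, hM, hk, Matrix.fromBlocks_apply₁₁, zero_add]
        have hPy : (P *ᵥ fun j => Polynomial.C (y j)) i = ∑ x, P i x * Polynomial.C (y x) := rfl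
        rw [hPy]
        exact Finset.sum_congr rfl fun j _ => mul_comm _ _
    | inr i =>
        simp only [Sum.elim_inr, Pi.add_apply, hw, Finset.sum_apply, Pi.smul_apply,
          smul_eq_mul, hM, hk, Matrix.fromBlocks_apply₂₁, Matrix.replicateRow_apply]
        have : (∑ j, Polynomial.C (y j) * Polynomial.C (c j)) = Polynomial.C (c ⬝ᵥ y) := by
          rw [dotProduct, map_sum]
          exact Finset.sum_congr rfl fun j _ => by rw [← Polynomial.C_mul, mul_comm]
        rw [this, hc]
        simp
  have h2 : (M.updateCol k
        (Sum.elim (fun i => (P *ᵥ fun j => Polynomial.C (y j)) i) (fun _ => 0))).det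
      = (M.updateCol k w).det := by
    have hz : ∀ j : Fin m, f (fun i => M i (Sum.inl j)) = 0 := by
      intro j
      exact Matrix.det_updateCol_eq_zero (M := M) (by simp [hk])
    have : f (Sum.elim (fun i => (P *ᵥ fun j => Polynomial.C (y j)) i) (fun _ => 0)) = f w := by
      rw [hvw, map_add, map_sum]
      simp [_root_.map_smul, hz]
    exact this
  -- Step 3: identify the result as a block triangular matrix
  have h3 : M.updateCol k w
      = Matrix.fromBlocks P 0 (Matrix.replicateRow (Fin 1) fun i => Polynomial.C (c i)) (-1) := by
    ext i j
    rcases i with i | i <;> rcases j with j | j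
    · simp [hM, hk, Matrix.updateCol_apply]
    · have hj : j = 0 := Subsingleton.elim j 0
      subst hj
      rcases Sum.inr_injective.eq_iff (a := (0 : Fin 1)) |>.mpr rfl with _
      simp [hM, hk, hw, Matrix.updateCol_apply, Matrix.one_apply]
    · simp [hM, hk, Matrix.updateCol_apply]
    · have hj : j = 0 := Subsingleton.elim j 0
      subst hj
      simp [hM, hk, hw, Matrix.updateCol_apply, Matrix.one_apply,
        Subsingleton.elim i 0]
  have h4 : (Matrix.fromBlocks P 0 (Matrix.replicateRow (Fin 1) fun i => Polynomial.C (c i))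
      ((-1 : Matrix (Fin 1) (Fin 1) (Polynomial ℂ)))).det = -p := by
    rw [Matrix.det_fromBlocks_zero₁₂, Matrix.det_fin_one]
    simp [hpdef]
  have hkey : (X - Polynomial.C μ) * M.det = -p := by
    rw [h1, hv, h2, h3, h4]
  -- Step 4: cancel (X - C μ)
  have hMdet : M.det = -q := by
    have hXC : (X - Polynomial.C μ : Polynomial ℂ) ≠ 0 := Polynomial.X_sub_C_ne_zero μ
    apply mul_left_cancel₀ hXC
    rw [hkey, ← hpq]
    ring
  -- Step 5: the Jacobian is the evaluation of M at μ
  have hJ : Matrix.fromBlocks (B₁ + lam • B₂ + μ • B₃)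
        (Matrix.replicateCol (Fin 1) (B₃ *ᵥ y)) (Matrix.replicateRow (Fin 1) c) 0
      = M.map (Polynomial.eval μ) := by
    ext i j
    rcases i with i | i <;> rcases j with j | j <;>
      simp [hM, hP, Matrix.map_apply, Matrix.add_apply, Matrix.smul_apply, smul_eq_mul,
        mul_comm μ]
  rw [Matrix.isUnit_iff_isUnit_det, hJ]
  have hmapdet : (M.map (Polynomial.eval μ)).det = Polynomial.eval μ M.det := by
    exact ((Polynomial.evalRingHom μ).map_det M).symm
  rw [hmapdet, hMdet]
  simpa using isUnit_iff_ne_zero.mpr (neg_ne_zero.mpr hq)
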